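/- Let φ : S^1 → S^1 be continuous, and suppose φ(−p) = R_p(φ(p)) for all p ∈ S^1, where R_p is reflection across the line through the origin perpendicular to p. Then φ has degree 1. -/

import Mathlib

open Metric ContinuousMap

namespace CircleReflAux

open Complex Real Set Finset

lemma abs_min_sub_min {t x y : ℝ} (hxy : y ≤ x) : |min t x - min t y| ≤ x - y := by
  rcases le_total t y with h | h
  · rw [min_eq_left (h.trans hxy), min_eq_left h]; simpa using sub_nonneg.2 hxy
  · rw [min_eq_right h]
    rcases le_total t x with h2 | h2
    · rw [min_eq_left h2, _root_.abs_of_nonneg (by linarith)]; linarith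
    · rw [min_eq_right h2, _root_.abs_of_nonneg (by linarith)]

lemma slit_cond {z : ℂ} (h1 : ‖z‖ = 1) (hne : z ≠ -1) : 0 < z.re ∨ z.im ≠ 0 := by
  by_contra hcon
  push_neg at hcon
  obtain ⟨hre, him⟩ := hcon
  have habs : ‖z‖ = |z.re| := by
    rw [Complex.norm_def, Complex.normSq_apply, him]
    simp [Real.sqrt_mul_self_eq_abs]
  rw [h1, abs_of_nonpos hre] at habs
  apply hne
  apply Complex.ext
  · simp; linarith
  · simpa using him

/-- Lifting lemma: a unimodular continuous function on ℝ admits a continuous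
argument lift on `[0, 2π]`. -/
lemma exists_lift (g : ℝ → ℂ) (hg : Continuous g) (hu : ∀ t, ‖g t‖ = 1) :
    ∃ F : ℝ → ℝ, ContinuousOn F (Icc 0 (2 * π)) ∧
      ∀ t ∈ Icc (0 : ℝ) (2 * π), Complex.exp (F t * Complex.I) = g t := by
  have hπ : (0:ℝ) < 2 * π := Real.two_pi_pos
  have hgne : ∀ t, g t ≠ 0 := by
    intro t ht
    have := hu t
    rw [ht] at this
    simp at this
  -- uniform continuity on [0, 2π]
  have hcomp : IsCompact (Icc (0:ℝ) (2*π)) := isCompact_Icc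
  have huc : UniformContinuousOn g (Icc 0 (2*π)) :=
    hcomp.uniformContinuousOn_of_continuous hg.continuousOn
  rw [Metric.uniformContinuousOn_iff] at huc
  obtain ⟨δ, hδ, hδ2⟩ := huc 2 (by norm_num)
  obtain ⟨n, hn⟩ := exists_nat_gt (2*π/δ)
  have hn0 : 0 < (n:ℝ) := lt_trans (by positivity) hn
  set c : ℝ := 2*π/n with hc
  have hc0 : 0 < c := by positivity
  have hcδ : c < δ := by
    rw [hc, div_lt_iff₀ hn0]
    calc 2*π = (2*π/δ) * δ := by field_simp
    _ < n * δ := by apply mul_lt_mul_of_pos_right hn hδ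
    _ = δ * n := by ring
  -- the partition points
  have hmem : ∀ t ∈ Icc (0:ℝ) (2*π), ∀ (x : ℝ), 0 ≤ x → min t x ∈ Icc (0:ℝ) (2*π) := by
    intro t ht x hx
    exact ⟨le_min ht.1 hx, (min_le_left _ _).trans ht.2⟩
  have hratio : ∀ t ∈ Icc (0:ℝ) (2*π), ∀ j : ℕ, (j:ℕ) < n →
      ‖g (min t ((j+1)*c)) / g (min t (j*c))‖ = 1 ∧
      g (min t ((j+1)*c)) / g (min t (j*c)) ≠ -1 := by
    intro t ht j hj
    have h1 : (0:ℝ) ≤ (j:ℝ)*c := by positivity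
    have h2 : (0:ℝ) ≤ ((j:ℝ)+1)*c := by positivity
    have ha := hmem t ht _ h2
    have hb := hmem t ht _ h1
    have hdist : dist (g (min t (((j:ℝ)+1)*c))) (g (min t ((j:ℝ)*c))) < 2 := by
      apply hδ2 _ ha _ hb
      rw [Real.dist_eq]
      calc |min t (((j:ℝ)+1)*c) - min t ((j:ℝ)*c)| ≤ ((j:ℝ)+1)*c - (j:ℝ)*c :=
            abs_min_sub_min (by nlinarith)
      _ = c := by ring
      _ < δ := hcδ
    constructor
    · rw [norm_div, hu, hu]; norm_num
    · intro heq
      rw [div_eq_iff (hgne _)] at heq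
      rw [heq] at hdist
      rw [dist_eq_norm] at hdist
      have : ‖-1 * g (min t ((j:ℝ)*c)) - g (min t ((j:ℝ)*c))‖ = 2 * ‖g (min t ((j:ℝ)*c))‖ := by
        have : -1 * g (min t ((j:ℝ)*c)) - g (min t ((j:ℝ)*c)) = -(2 * g (min t ((j:ℝ)*c))) := by ring
        rw [this]
        simp
      rw [this, hu] at hdist
      norm_num at hdist
  refine ⟨fun t => Complex.arg (g 0) +
    ∑ j ∈ Finset.range n, Complex.arg (g (min t (((j:ℝ)+1)*c)) / g (min t ((j:ℝ)*c))), ?_, ?_⟩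
  · apply ContinuousOn.add continuousOn_const
    apply continuousOn_finset_sum
    intro j hj
    rw [Finset.mem_range] at hj
    intro t ht
    have hw : Continuous (fun t => g (min t (((j:ℝ)+1)*c)) / g (min t ((j:ℝ)*c))) := by
      apply Continuous.div
      · exact hg.comp (continuous_id.min continuous_const)
      · exact hg.comp (continuous_id.min continuous_const)
      · intro x; exact hgne _
    have hcond := hratio t ht j hj
    have harg : ContinuousAt (fun t => Complex.arg (g (min t (((j:ℝ)+1)*c)) / g (min t ((j:ℝ)*c)))) t :=
      ContinuousAt.comp (g := Complex.arg) (Complex.continuousAt_arg (slit_cond hcond.1 hcond.2))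
        hw.continuousAt
    exact harg.continuousWithinAt
  · intro t ht
    have htel : ∀ m : ℕ, m ≤ n →
        ∏ j ∈ Finset.range m, (g (min t (((j:ℝ)+1)*c)) / g (min t ((j:ℝ)*c)))
          = g (min t ((m:ℝ)*c)) / g (min t 0) := by
      intro m hm
      induction m with
      | zero => simp [div_self (hgne (min t 0))]
      | succ k ih =>
        rw [Finset.prod_range_succ, ih (le_of_lt (Nat.lt_of_succ_le hm))]
        push_cast
        rw [div_mul_div_comm]
        rw [mul_comm (g (min t ((k:ℝ)*c)))]
        rw [mul_comm (g (min t 0)) (g (min t ((k:ℝ)*c)))]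
        rw [← div_div]
        rw [mul_div_assoc]
        rw [div_self (hgne _), mul_one]
    have hnc : (n:ℝ) * c = 2*π := by rw [hc]; field_simp
    push_cast
    rw [add_mul, Complex.exp_add]
    have h0 : Complex.exp ((Complex.arg (g 0) : ℂ) * Complex.I) = g 0 := by
      have := Complex.norm_mul_exp_arg_mul_I (g 0)
      rw [hu 0] at this
      simpa using this
    rw [h0, Finset.sum_mul, Complex.exp_sum]
    have hterm : ∀ j ∈ Finset.range n,
        Complex.exp ((Complex.arg (g (min t (((j:ℝ)+1)*c)) / g (min t ((j:ℝ)*c))) : ℂ) * Complex.I)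
          = g (min t (((j:ℝ)+1)*c)) / g (min t ((j:ℝ)*c)) := by
      intro j hj
      rw [Finset.mem_range] at hj
      have := Complex.norm_mul_exp_arg_mul_I (g (min t (((j:ℝ)+1)*c)) / g (min t ((j:ℝ)*c)))
      rw [(hratio t ht j hj).1] at this
      simpa using this
    rw [Finset.prod_congr rfl hterm, htel n le_rfl, hnc,
      min_eq_left ht.2, min_eq_right ht.1]
    rw [mul_comm, div_mul_eq_mul_div, mul_div_assoc, div_self (hgne 0), mul_one]

end CircleReflAux

open Complex Real Set AddCircle CircleReflAux in
/-- If a continuous self-map φ of the circle S¹ (unit complex numbers) satisfies the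
reflection symmetry φ(−p) = R_p(φ(p)) = −p² ⋅ conj(φ(p)) for all p ∈ S¹, then φ has
degree 1.  Here `deg` is any homotopy-invariant degree function with deg(id) = 1. -/
theorem circle_map_reflection_symmetry_degree_one
    (φ : C(sphere (0 : ℂ) 1, sphere (0 : ℂ) 1))
    (h : ∀ p : sphere (0 : ℂ) 1,
      (φ (-p) : ℂ) = -(p : ℂ) ^ 2 * (starRingEnd ℂ) (φ p : ℂ))
    (deg : C(sphere (0 : ℂ) 1, sphere (0 : ℂ) 1) → ℤ)
    (hdeg_homotopy : ∀ f g, f.Homotopic g → deg f = deg g)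
    (hdeg_id : deg (ContinuousMap.id _) = 1) :
    deg φ = 1 := by
  haveI : Fact (0 < 2 * π) := ⟨Real.two_pi_pos⟩
  have habs : ∀ p : sphere (0:ℂ) 1, ‖(p:ℂ)‖ = 1 :=
    fun p => mem_sphere_zero_iff_norm.1 p.2
  -- the standard parametrization of the circle
  set E : ℝ → sphere (0:ℂ) 1 := fun t =>
    ⟨Complex.exp ((t:ℂ) * Complex.I), by
      simp [mem_sphere_zero_iff_norm, Complex.norm_exp_ofReal_mul_I]⟩
    with hEdef
  have hEc : Continuous E :=
    Continuous.subtype_mk ((Complex.continuous_ofReal.mul continuous_const).cexp) _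
  have hEcoe : ∀ t : ℝ, (E t : ℂ) = Complex.exp ((t:ℂ) * Complex.I) := fun t => rfl
  -- the auxiliary map ψ expressed on ℝ
  set g : ℝ → ℂ := fun t => (φ (E t) : ℂ) * Complex.exp (-(t:ℂ) * Complex.I) with hgdef
  have hgc : Continuous g := by
    apply Continuous.mul
    · exact continuous_subtype_val.comp (φ.continuous.comp hEc)
    · exact ((Complex.continuous_ofReal.mul (continuous_const : Continuous fun _ : ℝ => Complex.I)).neg.cexp).congr
        (fun t => by simp only [Pi.neg_apply, Pi.mul_apply, neg_mul])
  have hq1 : ∀ t : ℝ, Complex.exp ((t:ℂ) * Complex.I) * Complex.exp (-(t:ℂ) * Complex.I) = 1 := by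
    intro t
    rw [← Complex.exp_add, show ((t:ℂ) * Complex.I + -(t:ℂ) * Complex.I) = 0 by ring,
      Complex.exp_zero]
  have hgu : ∀ t, ‖g t‖ = 1 := by
    intro t
    rw [hgdef]
    simp only [norm_mul, habs]
    rw [show (-(t:ℂ) * Complex.I) = ((-t : ℝ) : ℂ) * Complex.I by push_cast; ring,
      Complex.norm_exp_ofReal_mul_I, one_mul]
  have hconj : ∀ p : sphere (0:ℂ) 1, (φ p : ℂ) * (starRingEnd ℂ) (φ p : ℂ) = 1 := by
    intro p
    rw [Complex.mul_conj]
    rw [show Complex.normSq (φ p : ℂ) = 1 by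
      rw [Complex.normSq_eq_norm_sq, habs (φ p)]; norm_num]
    simp
  have hrel : ∀ t : ℝ, g (t + π) * g t = 1 := by
    intro t
    have hEpi : E (t + π) = -E t := by
      apply Subtype.ext
      show Complex.exp ((((t+π):ℝ):ℂ) * Complex.I) = -(E t : ℂ)
      rw [hEcoe]
      push_cast
      rw [add_mul, Complex.exp_add, Complex.exp_pi_mul_I]
      ring
    have hsplit : Complex.exp (-(((t + π):ℝ):ℂ) * Complex.I)
        = Complex.exp (-(t:ℂ) * Complex.I) * (-1) := by
      rw [show (-(((t + π):ℝ):ℂ) * Complex.I) = -(t:ℂ) * Complex.I + (π:ℂ) * Complex.I + (-(2*(π:ℂ) * Complex.I)) by push_cast; ring]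
      rw [Complex.exp_add, Complex.exp_add, Complex.exp_pi_mul_I]
      rw [show (-(2*(π:ℂ) * Complex.I)) = -((2*π:ℝ):ℂ) * Complex.I by push_cast; ring]
      rw [show Complex.exp (-((2*π:ℝ):ℂ) * Complex.I) = 1 by
        rw [show (-((2*π:ℝ):ℂ) * Complex.I) = ((-1 : ℤ):ℂ) * (2 * (π:ℂ) * Complex.I) by
          push_cast; ring]
        exact Complex.exp_int_mul_two_pi_mul_I (-1)]
      ring
    rw [hgdef]
    simp only
    rw [hEpi, h (E t), hsplit, hEcoe]
    have hc := hconj (E t)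
    have hq := hq1 t
    set q := Complex.exp ((t:ℂ) * Complex.I)
    set r := Complex.exp (-(t:ℂ) * Complex.I)
    set f := (φ (E t) : ℂ)
    calc -q ^ 2 * (starRingEnd ℂ) f * (r * -1) * (f * r)
        = (q * r) ^ 2 * (f * (starRingEnd ℂ) f) := by ring
    _ = 1 := by rw [hq, hc]; norm_num
  -- lift g over [0, 2π]
  obtain ⟨F, hFc, hFe⟩ := CircleReflAux.exists_lift g hgc hgu
  -- endpoints of the lift agree, thanks to the reflection symmetry
  have hF02 : F 0 = F (2 * π) := by
    set G : ℝ → ℝ := fun t => F (t + π) + F t with hGdef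
    have hsub : Icc (0:ℝ) π ⊆ Icc 0 (2*π) := by
      apply Icc_subset_Icc le_rfl
      nlinarith [Real.pi_pos]
    have hmap : ∀ t ∈ Icc (0:ℝ) π, t + π ∈ Icc (0:ℝ) (2*π) := by
      intro t ht
      constructor
      · nlinarith [ht.1, Real.pi_pos]
      · nlinarith [ht.2]
    have hGc : ContinuousOn G (Icc 0 π) := by
      apply ContinuousOn.add
      · exact ContinuousOn.comp hFc
          ((continuous_id.add continuous_const).continuousOn) hmap
      · exact hFc.mono hsub
    have hGint : ∀ t ∈ Icc (0:ℝ) π, ∃ k : ℤ, G t = 2 * π * k := by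
      intro t ht
      have h1 : Complex.exp ((G t : ℂ) * Complex.I) = 1 := by
        rw [hGdef]
        push_cast
        rw [add_mul, Complex.exp_add, hFe _ (hmap t ht), hFe _ (hsub ht), hrel]
      rw [Complex.exp_eq_one_iff] at h1
      obtain ⟨k, hk⟩ := h1
      refine ⟨k, ?_⟩
      rw [show (k:ℂ) * (2 * (π:ℂ) * Complex.I) = ((k:ℝ) * (2*π) : ℝ) * Complex.I by
        push_cast; ring] at hk
      have := mul_right_cancel₀ Complex.I_ne_zero hk
      have h2 : G t = (k:ℝ) * (2*π) := by exact_mod_cast this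
      linarith
    have hG0π : G 0 = G π := by
      obtain ⟨k0, hk0⟩ := hGint 0 ⟨le_rfl, Real.pi_pos.le⟩
      obtain ⟨k1, hk1⟩ := hGint π ⟨Real.pi_pos.le, le_rfl⟩
      rcases lt_trichotomy (G 0) (G π) with hlt | heq | hgt
      · exfalso
        have hkk : k0 < k1 := by
          have : (k0:ℝ) < k1 := by
            rw [hk0, hk1] at hlt
            nlinarith [Real.pi_pos]
          exact_mod_cast this
        have hmid : 2*π*k0 + π ∈ Icc (G 0) (G π) := by
          constructor
          · rw [hk0]; nlinarith [Real.pi_pos]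
          · rw [hk1]
            have : (k0:ℝ) + 1 ≤ k1 := by exact_mod_cast hkk
            nlinarith [Real.pi_pos]
        obtain ⟨t, ht, hGt⟩ := intermediate_value_Icc Real.pi_pos.le hGc hmid
        obtain ⟨k, hk⟩ := hGint t ht
        rw [hk] at hGt
        have hpar : (2*(k:ℝ)) * π = (2*(k0:ℝ) + 1) * π := by nlinarith
        have := mul_right_cancel₀ (ne_of_gt Real.pi_pos) hpar
        have h3 : 2*k = 2*k0 + 1 := by exact_mod_cast this
        omega
      · exact heq
      · exfalso
        have hkk : k1 < k0 := by
          have : (k1:ℝ) < k0 := by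
            rw [hk0, hk1] at hgt
            nlinarith [Real.pi_pos]
          exact_mod_cast this
        have hmid : 2*π*k1 + π ∈ Icc (G π) (G 0) := by
          constructor
          · rw [hk1]; nlinarith [Real.pi_pos]
          · rw [hk0]
            have : (k1:ℝ) + 1 ≤ k0 := by exact_mod_cast hkk
            nlinarith [Real.pi_pos]
        obtain ⟨t, ht, hGt⟩ := intermediate_value_Icc' Real.pi_pos.le hGc hmid
        obtain ⟨k, hk⟩ := hGint t ht
        rw [hk] at hGt
        have hpar : (2*(k:ℝ)) * π = (2*(k1:ℝ) + 1) * π := by nlinarith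
        have := mul_right_cancel₀ (ne_of_gt Real.pi_pos) hpar
        have h3 : 2*k = 2*k1 + 1 := by exact_mod_cast this
        omega
    have e0 : G 0 = F π + F 0 := by rw [hGdef]; simp
    have eπ : G π = F (2*π) + F π := by
      rw [hGdef]
      simp only
      rw [show π + π = 2*π by ring]
    rw [e0, eπ] at hG0π
    linarith
  -- descend the lift to a continuous angle function on the circle
  set Θ : sphere (0:ℂ) 1 → ℝ := fun p =>
    AddCircle.liftIco (2*π) 0 F (AddCircle.homeomorphCircle'.symm ⟨(p:ℂ), p.2⟩) with hΘdef
  have hΘc : Continuous Θ := by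
    apply (AddCircle.liftIco_zero_continuous hF02 hFc).comp
    exact AddCircle.homeomorphCircle'.symm.continuous.comp
      (Continuous.subtype_mk continuous_subtype_val _)
  have hΘ : ∀ p : sphere (0:ℂ) 1, (φ p : ℂ) = (p:ℂ) * Complex.exp ((Θ p : ℂ) * Complex.I) := by
    intro p
    set x : AddCircle (2*π) := AddCircle.homeomorphCircle'.symm ⟨(p:ℂ), p.2⟩ with hxdef
    set s : Ico (0:ℝ) (0 + 2*π) := AddCircle.equivIco (2*π) 0 x with hsdef
    have hsx : (((s:ℝ)) : AddCircle (2*π)) = x := (AddCircle.equivIco (2*π) 0).symm_apply_apply x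
    have hs2 : (s:ℝ) ∈ Icc (0:ℝ) (2*π) := by
      obtain ⟨h1, h2⟩ := s.2
      exact ⟨h1, by linarith⟩
    have hΘp : Θ p = F s := by
      rw [hΘdef]
      simp only
      rw [← hxdef, ← hsx]
      exact AddCircle.liftIco_coe_apply s.2
    have hpexp : (p:ℂ) = Complex.exp (((s:ℝ):ℂ) * Complex.I) := by
      have h1 : AddCircle.homeomorphCircle' x = (⟨(p:ℂ), p.2⟩ : Circle) :=
        AddCircle.homeomorphCircle'.apply_symm_apply _
      rw [← hsx, homeomorphCircle'_apply_mk] at h1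
      have h2 := congrArg (fun z : Circle => (z : ℂ)) h1
      simpa [Circle.coe_exp] using h2.symm
    have hEs : E (s:ℝ) = p := by
      apply Subtype.ext
      rw [hEcoe, ← hpexp]
    have hgs := hFe (s:ℝ) hs2
    rw [hΘp]
    rw [hgs, hgdef]
    simp only
    rw [hEs, hpexp]
    calc (φ p : ℂ) = (φ p : ℂ) * (Complex.exp (((s:ℝ):ℂ) * Complex.I) *
        Complex.exp (-((s:ℝ):ℂ) * Complex.I)) := by rw [hq1]; ring
    _ = Complex.exp (((s:ℝ):ℂ) * Complex.I) * ((φ p : ℂ) * Complex.exp (-((s:ℝ):ℂ) * Complex.I)) := by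
        ring
  -- the homotopy from φ to the identity
  have hom : φ.Homotopic (ContinuousMap.id _) := by
    refine ⟨{
      toFun := fun q => ⟨(q.2 : ℂ) *
        Complex.exp ((((1 - (q.1 : ℝ)) * Θ q.2 : ℝ) : ℂ) * Complex.I), ?_⟩
      continuous_toFun := ?_
      map_zero_left := ?_
      map_one_left := ?_ }⟩
    · rw [mem_sphere_zero_iff_norm]
      rw [norm_mul, habs,
        Complex.norm_exp_ofReal_mul_I, one_mul]
    · apply Continuous.subtype_mk
      apply Continuous.mul
      · exact continuous_subtype_val.comp continuous_snd
      · apply Complex.continuous_exp.comp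
        apply Continuous.mul _ continuous_const
        apply Complex.continuous_ofReal.comp
        exact (continuous_const.sub (continuous_subtype_val.comp continuous_fst)).mul
          (hΘc.comp continuous_snd)
    · intro p
      apply Subtype.ext
      show (p:ℂ) * Complex.exp ((((1 - ((0 : unitInterval) : ℝ)) * Θ p : ℝ) : ℂ) * Complex.I)
        = (φ p : ℂ)
      rw [hΘ p]
      norm_num
    · intro p
      apply Subtype.ext
      show (p:ℂ) * Complex.exp ((((1 - ((1 : unitInterval) : ℝ)) * Θ p : ℝ) : ℂ) * Complex.I)
        = (p : ℂ)
      norm_num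
  rw [hdeg_homotopy φ _ hom, hdeg_id]
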